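/- If w is a palindrome which has period p and |w| ≥ 2p + 1, then w is a factor of (st)^ω for some palindromes s and t with |st| = p; that is, w is a palindromic periodicity with period p. -/
import Mathlib


/-- `w` (of length `n`) is a palindromic periodicity with period `p`: there are
palindromes `s` (length `sl`) and `t` (length `p - sl`), encoded as the word
`u = st` of length `p`, such that `w` is a factor of `(st)^ω` and `|w| ≥ p`. -/
def PalPer {α : Type*} (w : ℕ → α) (n p : ℕ) : Prop :=
  0 < p ∧ p ≤ n ∧
    ∃ (sl : ℕ) (u : ℕ → α) (k : ℕ), sl ≤ p ∧
      (∀ i j, i + j + 1 = sl → u i = u j) ∧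
      (∀ i j, sl ≤ i → sl ≤ j → i + j + 1 = sl + p → u i = u j) ∧
      (∀ i < n, w i = u ((k + i) % p))

/-- A palindrome `w` of length `n` with period `p` and `n ≥ 2p + 1` is a
palindromic periodicity with period `p`. -/
theorem stmt_7 {α : Type*} (w : ℕ → α) (n p : ℕ) (hp0 : 0 < p)
    (hpal : ∀ i j, i + j + 1 = n → w i = w j)
    (hper : ∀ i, i + p < n → w i = w (i + p))
    (hn : 2 * p + 1 ≤ n) :
    PalPer w n p := by
  have hpn : p ≤ n := by omega
  -- reduce to the representative modulo p
  have L1 : ∀ i, i < n → w i = w (i % p) := by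
    intro i
    induction i using Nat.strong_induction_on with
    | _ i ih =>
      intro hi
      by_cases h : i < p
      · rw [Nat.mod_eq_of_lt h]
      · have h2 : (i - p) + p = i := by omega
        have hp' := hper (i - p) (by omega)
        rw [h2] at hp'
        have h3 : (i - p) % p = i % p := by
          conv_rhs => rw [← h2]
          rw [Nat.add_mod_right]
        rw [← hp', ih (i - p) (by omega) (by omega), h3]
  -- symmetry of the period pattern
  have L2 : ∀ i j, i < p → j < p → (i + j) % p = (n - 1) % p → w i = w j := by
    intro i j hi hj hmod
    have h1 : i + (n - 1 - i) + 1 = n := by omega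
    have h2 := hpal i (n - 1 - i) h1
    have h3 := L1 (n - 1 - i) (by omega)
    have he : j + i ≡ (n - 1 - i) + i [MOD p] := by
      unfold Nat.ModEq
      rw [Nat.add_comm j i, hmod]
      congr 1
      omega
    have h5 : j ≡ (n - 1 - i) [MOD p] := Nat.ModEq.add_right_cancel' i he
    have h4 : (n - 1 - i) % p = j := by
      rw [← h5, Nat.mod_eq_of_lt hj]
    rw [h2, h3, h4]
  have hmlt : n % p < p := Nat.mod_lt _ hp0
  have key : ∀ m, m + 1 = n % p ∨ m + 1 = n % p + p → m % p = (n - 1) % p := by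
    intro m hm
    have hpz : (p : ℕ) ≡ 0 [MOD p] := Nat.modEq_zero_iff_dvd.mpr dvd_rfl
    have h : m + 1 ≡ (n - 1) + 1 [MOD p] := by
      have hn1 : n - 1 + 1 = n := by omega
      rw [hn1]
      rcases hm with h | h
      · rw [h]; exact Nat.mod_modEq n p
      · rw [h]
        calc n % p + p ≡ n % p + 0 [MOD p] := Nat.ModEq.add_left _ hpz
          _ = n % p := by omega
          _ ≡ n [MOD p] := Nat.mod_modEq n p
    exact Nat.ModEq.add_right_cancel' 1 h
  refine ⟨hp0, hpn, n % p, w, 0, le_of_lt hmlt, ?_, ?_, ?_⟩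
  · intro i j hij
    exact L2 i j (by omega) (by omega) (key (i + j) (Or.inl hij))
  · intro i j hi hj hij
    exact L2 i j (by omega) (by omega) (key (i + j) (Or.inr hij))
  · intro i hi
    rw [Nat.zero_add]
    exact L1 i hi
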